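/- Let A = A₀ ⊕ A₁ be a prime superalgebra over a commutative unital ring φ with 1/2 ∈ φ, and let I be a nonzero two-sided ideal of the ring A₀. If x₁ ∈ A₁ satisfies x₁ y = y x₁ for every y ∈ I, then x₁ belongs to the center Z(A) of A. -/

import Mathlib

open DirectSum

/-- The sign `(−1)^{ij}` for degrees `i j : ZMod 2`. -/
def ssign (i j : ZMod 2) : ℤ := if i = 1 ∧ j = 1 then -1 else 1

variable {φ A : Type*}

section
variable [CommRing φ] [Ring A] [Algebra φ A]

/-- Superbracket `[x,y] = xy − (−1)^{ij} yx` of homogeneous elements of degrees `i`, `j`. -/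
def sbr (i j : ZMod 2) (x y : A) : A := x * y - ssign i j • (y * x)

/-- Supercircle product `x∘y = xy + (−1)^{ij} yx` of homogeneous elements of degrees `i`, `j`. -/
def scirc (i j : ZMod 2) (x y : A) : A := x * y + ssign i j • (y * x)

/-- A graded two-sided ideal of the superalgebra `A = ⨁ 𝒜 i`. -/
structure SuperIdeal (𝒜 : ZMod 2 → Submodule φ A) [GradedAlgebra 𝒜] where
  carrier : Submodule φ A
  mul_mem_left : ∀ (a x : A), x ∈ carrier → a * x ∈ carrier
  mul_mem_right : ∀ (a x : A), x ∈ carrier → x * a ∈ carrier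
  graded' : ∀ (i : ZMod 2), ∀ x ∈ carrier, ((DirectSum.decompose 𝒜 x) i : A) ∈ carrier

variable (𝒜 : ZMod 2 → Submodule φ A)

/-- A superalgebra is prime if `I⬝J = 0` forces `I = 0` or `J = 0` for graded ideals `I`, `J`. -/
def SuperPrime [GradedAlgebra 𝒜] : Prop :=
  ∀ I J : SuperIdeal 𝒜, (∀ x ∈ I.carrier, ∀ y ∈ J.carrier, x * y = 0) →
    I.carrier = ⊥ ∨ J.carrier = ⊥

/-- A superalgebra is semiprime if it has no nonzero graded ideal of square zero. -/
def SuperSemiprime [GradedAlgebra 𝒜] : Prop :=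
  ∀ I : SuperIdeal 𝒜, (∀ x ∈ I.carrier, ∀ y ∈ I.carrier, x * y = 0) → I.carrier = ⊥

/-- `Z`, the even part of the center of `A`. -/
def evenCenter : Set A := {z : A | z ∈ 𝒜 0 ∧ ∀ x : A, z * x = x * z}

/-- A subset `M` of `A` is dense if the (non-unital) subalgebra of `A` generated by `M`
contains a nonzero ideal of `A`. -/
def IsDenseIn [GradedAlgebra 𝒜] (M : Set A) : Prop :=
  ∃ J : SuperIdeal 𝒜, J.carrier ≠ ⊥ ∧
    (J.carrier : Set A) ⊆ NonUnitalAlgebra.adjoin φ M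

/-- A superinvolution on the superalgebra `A`. -/
structure Superinvolution (𝒜 : ZMod 2 → Submodule φ A) where
  toFun : A →ₗ[φ] A
  grading : ∀ (i : ZMod 2), ∀ x ∈ 𝒜 i, toFun x ∈ 𝒜 i
  invol : ∀ x : A, toFun (toFun x) = x
  mul_rev : ∀ (i j : ZMod 2), ∀ x ∈ 𝒜 i, ∀ y ∈ 𝒜 j,
    toFun (x * y) = ssign i j • (toFun y * toFun x)

/-- A Lie ideal of the Lie superalgebra `K` of skew elements of `(A,*)`: a graded
`φ`-submodule of `K` with `[U,K] ⊆ U`. -/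
structure LieIdealOfSkew [GradedAlgebra 𝒜] (σ : Superinvolution 𝒜) where
  carrier : Submodule φ A
  skew : ∀ x ∈ carrier, σ.toFun x = -x
  graded' : ∀ (i : ZMod 2), ∀ x ∈ carrier, ((DirectSum.decompose 𝒜 x) i : A) ∈ carrier
  bracket_mem : ∀ (i j : ZMod 2) (u k : A), u ∈ carrier → u ∈ 𝒜 i →
    k ∈ 𝒜 j → σ.toFun k = -k → sbr i j u k ∈ carrier

/-- The additive span of superbrackets of homogeneous elements of `S` and `T`. -/
def superBrAdd (S T : Set A) : AddSubgroup A :=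
  AddSubgroup.closure
    {z : A | ∃ (i j : ZMod 2) (x y : A), x ∈ S ∧ x ∈ 𝒜 i ∧ y ∈ T ∧ y ∈ 𝒜 j ∧ z = sbr i j x y}

/-- The `φ`-submodule spanned by superbrackets of homogeneous elements of `S` and `T`. -/
def superBrSpan (S T : Set A) : Submodule φ A :=
  Submodule.span φ
    {z : A | ∃ (i j : ZMod 2) (x y : A), x ∈ S ∧ x ∈ 𝒜 i ∧ y ∈ T ∧ y ∈ 𝒜 j ∧ z = sbr i j x y}

end

/-- Data exhibiting the prime superalgebra `A` as a central order in a simple superalgebra `B`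
that is 4-dimensional over its center. -/
structure CentralOrderIn4DimSimple (φ : Type*) [CommRing φ] {A : Type*} [Ring A] [Algebra φ A]
    (𝒜 : ZMod 2 → Submodule φ A) [GradedAlgebra 𝒜] where
  B : Type
  [ringB : Ring B]
  [algB : Algebra φ B]
  ℬ : ZMod 2 → Submodule φ B
  [gradedB : GradedAlgebra ℬ]
  ι : A →ₐ[φ] B
  inj : Function.Injective ι
  grading : ∀ (i : ZMod 2), ∀ x ∈ 𝒜 i, ι x ∈ ℬ i
  central_unit : ∀ z ∈ evenCenter 𝒜, z ≠ 0 → IsUnit (ι z)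
  localized : ∀ b : B, ∃ z a : A, z ∈ evenCenter 𝒜 ∧ z ≠ 0 ∧ ι z * b = ι a
  sq_ne_zero : ∃ x y : B, x * y ≠ 0
  simple : ∀ J : SuperIdeal ℬ, J.carrier = ⊥ ∨ J.carrier = ⊤
  dim4 : Module.finrank (Subring.center B) B = 4

/-- `I` is a two-sided ideal of the (sub)ring `B` of `A`. -/
def IsTwoSidedIdealIn {A : Type*} [Ring A] (B I : Set A) : Prop :=
  I ⊆ B ∧ (0 : A) ∈ I ∧ (∀ x ∈ I, ∀ y ∈ I, x + y ∈ I) ∧ (∀ x ∈ I, -x ∈ I) ∧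
    ∀ b ∈ B, ∀ x ∈ I, b * x ∈ I ∧ x * b ∈ I

section Helpers

variable {φ A : Type*} [CommRing φ] [Ring A] [Algebra φ A]
variable (𝒜 : ZMod 2 → Submodule φ A) [GradedAlgebra 𝒜]

private lemma sum_univ_zmod2' {M : Type*} [AddCommMonoid M] (f : ZMod 2 → M) :
    ∑ i : ZMod 2, f i = f 0 + f 1 := by
  have h : (Finset.univ : Finset (ZMod 2)) = {0, 1} := by decide
  rw [h, Finset.sum_pair (by decide : (0 : ZMod 2) ≠ 1)]

private lemma decompose_even_add_odd (r : A) :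
    (DirectSum.decompose 𝒜 r 0 : A) + (DirectSum.decompose 𝒜 r 1 : A) = r := by
  classical
  have h := DirectSum.sum_support_decompose 𝒜 r
  have h2 : ∑ i : ZMod 2, (DirectSum.decompose 𝒜 r i : A)
      = ∑ i ∈ (DirectSum.decompose 𝒜 r).support, (DirectSum.decompose 𝒜 r i : A) := by
    symm
    apply Finset.sum_subset (Finset.subset_univ _)
    intro x _ hx
    have h0 := DFinsupp.notMem_support_iff.mp hx
    rw [h0]
    rfl
  rw [sum_univ_zmod2'] at h2
  rw [h2, h]

/-- Sandwiches `p * g * q` with homogeneous `p`, `q` and `g` in `G`. -/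
private def sandwichH (G : Set A) : Set A :=
  {z | ∃ (i j : ZMod 2) (p q g : A), p ∈ 𝒜 i ∧ q ∈ 𝒜 j ∧ g ∈ G ∧ z = p * g * q}

private lemma mem_sandwichH_self {G : Set A} {g : A} (hg : g ∈ G) : g ∈ sandwichH 𝒜 G :=
  ⟨0, 0, 1, 1, g, SetLike.one_mem_graded _, SetLike.one_mem_graded _, hg,
    by rw [one_mul, mul_one]⟩

/-- The graded ideal generated by a set of `d`-homogeneous elements. -/
private def genIdeal (G : Set A) (d : ZMod 2) (hG : ∀ g ∈ G, g ∈ 𝒜 d) : SuperIdeal 𝒜 where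
  carrier := Submodule.span φ (sandwichH 𝒜 G)
  mul_mem_left := by
    intro a x hx
    induction hx using Submodule.span_induction with
    | mem z hz =>
      obtain ⟨i, j, p, q, g, hp, hq, hg, rfl⟩ := hz
      have heq : a * (p * g * q) =
          (DirectSum.decompose 𝒜 a 0 : A) * p * g * q +
          (DirectSum.decompose 𝒜 a 1 : A) * p * g * q := by
        conv_lhs => rw [← decompose_even_add_odd 𝒜 a]
        noncomm_ring
      rw [heq]
      exact add_mem
        (Submodule.subset_span ⟨0 + i, j, _, q, g,
          SetLike.mul_mem_graded (SetLike.coe_mem _) hp, hq, hg, rfl⟩)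
        (Submodule.subset_span ⟨1 + i, j, _, q, g,
          SetLike.mul_mem_graded (SetLike.coe_mem _) hp, hq, hg, rfl⟩)
    | zero => rw [mul_zero]; exact Submodule.zero_mem _
    | add x y hx hy ihx ihy => rw [mul_add]; exact add_mem ihx ihy
    | smul r x hx ih => rw [mul_smul_comm]; exact Submodule.smul_mem _ r ih
  mul_mem_right := by
    intro a x hx
    induction hx using Submodule.span_induction with
    | mem z hz =>
      obtain ⟨i, j, p, q, g, hp, hq, hg, rfl⟩ := hz
      have heq : (p * g * q) * a =
          p * g * (q * (DirectSum.decompose 𝒜 a 0 : A)) +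
          p * g * (q * (DirectSum.decompose 𝒜 a 1 : A)) := by
        conv_lhs => rw [← decompose_even_add_odd 𝒜 a]
        noncomm_ring
      rw [heq]
      exact add_mem
        (Submodule.subset_span ⟨i, j + 0, p, _, g, hp,
          SetLike.mul_mem_graded hq (SetLike.coe_mem _), hg, by rw [mul_assoc]⟩)
        (Submodule.subset_span ⟨i, j + 1, p, _, g, hp,
          SetLike.mul_mem_graded hq (SetLike.coe_mem _), hg, by rw [mul_assoc]⟩)
    | zero => rw [zero_mul]; exact Submodule.zero_mem _
    | add x y hx hy ihx ihy => rw [add_mul]; exact add_mem ihx ihy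
    | smul r x hx ih => rw [smul_mul_assoc]; exact Submodule.smul_mem _ r ih
  graded' := by
    intro k x hx
    induction hx using Submodule.span_induction with
    | mem z hz =>
      obtain ⟨i, j, p, q, g, hp, hq, hg, rfl⟩ := hz
      have hzmem : p * g * q ∈ 𝒜 (i + d + j) :=
        SetLike.mul_mem_graded (SetLike.mul_mem_graded hp (hG g hg)) hq
      by_cases hk : k = i + d + j
      · rw [hk, DirectSum.decompose_of_mem_same 𝒜 hzmem]
        exact Submodule.subset_span ⟨i, j, p, q, g, hp, hq, hg, rfl⟩
      · rw [DirectSum.decompose_of_mem_ne 𝒜 hzmem (Ne.symm hk)]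
        exact Submodule.zero_mem _
    | zero =>
      rw [DirectSum.decompose_zero]
      simp
    | add x y hx hy ihx ihy =>
      rw [DirectSum.decompose_add, DirectSum.add_apply]
      exact add_mem ihx ihy
    | smul r x hx ih =>
      rw [DirectSum.decompose_smul]
      rw [DirectSum.smul_apply, Submodule.coe_smul]
      exact Submodule.smul_mem _ r ih
  
private lemma span_pair_mul_zero {S T : Set A}
    (h : ∀ z ∈ S, ∀ w ∈ T, z * w = 0) :
    ∀ x ∈ Submodule.span φ S, ∀ y ∈ Submodule.span φ T, x * y = 0 := by
  intro x hx
  induction hx using Submodule.span_induction with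
  | mem z hz =>
    intro y hy
    induction hy using Submodule.span_induction with
    | mem w hw => exact h z hz w hw
    | zero => rw [mul_zero]
    | add w₁ w₂ h₁ h₂ ih₁ ih₂ => rw [mul_add, ih₁, ih₂, add_zero]
    | smul r w hw ih => rw [mul_smul_comm, ih, smul_zero]
  | zero => intro y hy; rw [zero_mul]
  | add x₁ x₂ h₁ h₂ ih₁ ih₂ => intro y hy; rw [add_mul, ih₁ y hy, ih₂ y hy, add_zero]
  | smul r x hx ih => intro y hy; rw [smul_mul_assoc, ih y hy, smul_zero]

/-- Key primeness tool: if `z * r * w = 0` for all `z ∈ G`, `w ∈ G'`, `r`, then one of the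
sets of homogeneous elements `G`, `G'` is zero. -/
private lemma pairPrime (hprime : SuperPrime 𝒜) {G G' : Set A} {d d' : ZMod 2}
    (hG : ∀ g ∈ G, g ∈ 𝒜 d) (hG' : ∀ g ∈ G', g ∈ 𝒜 d')
    (h : ∀ z ∈ G, ∀ r : A, ∀ w ∈ G', z * r * w = 0) :
    (∀ g ∈ G, g = 0) ∨ (∀ g ∈ G', g = 0) := by
  have hz : ∀ x ∈ (genIdeal 𝒜 G d hG).carrier,
      ∀ y ∈ (genIdeal 𝒜 G' d' hG').carrier, x * y = 0 := by
    apply span_pair_mul_zero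
    rintro z ⟨i, j, p, q, g, hp, hq, hg, rfl⟩ w ⟨i', j', p', q', g', hp', hq', hg', rfl⟩
    have h0 : g * (q * p') * g' = 0 := h g hg _ g' hg'
    calc (p * g * q) * (p' * g' * q') = p * (g * (q * p') * g') * q' := by noncomm_ring
    _ = 0 := by rw [h0, mul_zero, zero_mul]
  rcases hprime _ _ hz with hbot | hbot
  · left
    intro g hg
    have hmem : g ∈ (genIdeal 𝒜 G d hG).carrier :=
      Submodule.subset_span (mem_sandwichH_self 𝒜 hg)
    rw [hbot] at hmem
    simpa using hmem
  · right
    intro g hg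
    have hmem : g ∈ (genIdeal 𝒜 G' d' hG').carrier :=
      Submodule.subset_span (mem_sandwichH_self 𝒜 hg)
    rw [hbot] at hmem
    simpa using hmem

end Helpers
/-- Let `A = A₀ ⊕ A₁` be a prime superalgebra over a commutative ring `φ` with `½ ∈ φ`, and
let `I` be a nonzero two-sided ideal of the ring `A₀`. If `x₁ ∈ A₁` centralizes `I`,
then `x₁ ∈ Z(A)`. -/
theorem odd_centralizing_even_ideal_central
    {φ A : Type*} [CommRing φ] [Invertible (2 : φ)] [Ring A] [Algebra φ A]
    (𝒜 : ZMod 2 → Submodule φ A) [GradedAlgebra 𝒜]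
    (hprime : SuperPrime 𝒜)
    (I : Set A) (hI : IsTwoSidedIdealIn (𝒜 0 : Set A) I) (hIne : I ≠ {0})
    (x₁ : A) (hx₁ : x₁ ∈ 𝒜 1)
    (hcomm : ∀ y ∈ I, x₁ * y = y * x₁) :
    x₁ ∈ Subring.center A := by
  obtain ⟨hIsub, hI0, hIadd, hIneg, hImul⟩ := hI
  -- notation: c = x₁ ; D a = c*a - a*c
  -- membership in 𝒜 0 of elements of I
  have hy0 : ∀ y ∈ I, y ∈ 𝒜 0 := fun y hy => hIsub hy
  have h11 : (1 : ZMod 2) + 1 = 0 := by decide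
  have h10 : (1 : ZMod 2) + 0 = 1 := by decide
  have h01 : (0 : ZMod 2) + 1 = 1 := by decide
  have h00 : (0 : ZMod 2) + 0 = 0 := by decide
  -- h1 : I * D(𝒜 0) = 0
  have h1 : ∀ y ∈ I, ∀ a ∈ 𝒜 0, y * (x₁ * a - a * x₁) = 0 := by
    intro y hy a ha
    have hya : y * a ∈ I := (hImul a ha y hy).2
    have e1 : x₁ * y = y * x₁ := hcomm y hy
    have e2 : x₁ * (y * a) = (y * a) * x₁ := hcomm _ hya
    calc y * (x₁ * a - a * x₁) = (x₁ * y) * a - (y * a) * x₁ := by rw [e1]; noncomm_ring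
    _ = 0 := by rw [mul_assoc, e2, sub_self]
  -- h2 : D(𝒜 0) * I = 0
  have h2 : ∀ a ∈ 𝒜 0, ∀ z ∈ I, (x₁ * a - a * x₁) * z = 0 := by
    intro a ha z hz
    have haz : a * z ∈ I := (hImul a ha z hz).1
    have e1 : x₁ * z = z * x₁ := hcomm z hz
    have e2 : x₁ * (a * z) = (a * z) * x₁ := hcomm _ haz
    calc (x₁ * a - a * x₁) * z = x₁ * (a * z) - a * (x₁ * z) := by noncomm_ring
    _ = 0 := by rw [e2, e1]; noncomm_ring
  -- the set V = I * 𝒜1 * D(𝒜 0)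
  set V : Set A :=
    {z | ∃ y x a, y ∈ I ∧ x ∈ 𝒜 1 ∧ a ∈ 𝒜 0 ∧ z = y * x * (x₁ * a - a * x₁)} with hV
  -- elements of V lie in I
  have hVI : ∀ z ∈ V, z ∈ I := by
    rintro z ⟨y, x, a, hy, hx, ha, rfl⟩
    have hxca : x * (x₁ * a) ∈ 𝒜 0 := by
      have := SetLike.mul_mem_graded hx (SetLike.mul_mem_graded hx₁ ha)
      rwa [h10, h11] at this
    have hxac : x * (a * x₁) ∈ 𝒜 0 := by
      have := SetLike.mul_mem_graded hx (SetLike.mul_mem_graded ha hx₁)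
      rwa [h01, h11] at this
    have m1 : y * (x * (x₁ * a)) ∈ I := (hImul _ hxca y hy).2
    have m2 : y * (x * (a * x₁)) ∈ I := (hImul _ hxac y hy).2
    have : y * x * (x₁ * a - a * x₁)
        = y * (x * (x₁ * a)) + -(y * (x * (a * x₁))) := by noncomm_ring
    rw [this]
    exact hIadd _ m1 _ (hIneg _ m2)
  -- V * I = 0
  have hVz : ∀ z ∈ V, ∀ w ∈ I, z * w = 0 := by
    rintro z ⟨y, x, a, hy, hx, ha, rfl⟩ w hw
    have h0 : (x₁ * a - a * x₁) * w = 0 := h2 a ha w hw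
    calc y * x * (x₁ * a - a * x₁) * w = y * (x * ((x₁ * a - a * x₁) * w)) := by
          noncomm_ring
    _ = 0 := by rw [h0, mul_zero, mul_zero]
  -- V * A * V = 0
  have hVmid : ∀ z ∈ V, ∀ r : A, ∀ z' ∈ V, z * r * z' = 0 := by
    intro z hz r z' hz'
    obtain ⟨y', x', a', hy', hx', ha', rfl⟩ := hz'
    have key : ∀ n : A, (∀ k, n ∈ 𝒜 k → True) → True := fun _ _ => trivial
    -- homogeneous middle, even case
    have heven : ∀ n ∈ 𝒜 0, z * n * (y' * x' * (x₁ * a' - a' * x₁)) = 0 := by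
      intro n hn
      have hny' : n * y' ∈ I := (hImul n hn y' hy').1
      have h0 : z * (n * y') = 0 := hVz z hz _ hny'
      calc z * n * (y' * x' * (x₁ * a' - a' * x₁))
          = z * (n * y') * (x' * (x₁ * a' - a' * x₁)) := by noncomm_ring
      _ = 0 := by rw [h0, zero_mul]
    -- homogeneous middle, odd case
    have hodd : ∀ n ∈ 𝒜 1, z * n * (y' * x' * (x₁ * a' - a' * x₁)) = 0 := by
      intro n hn
      have hm : n * y' * x' ∈ 𝒜 0 := by
        have := SetLike.mul_mem_graded (SetLike.mul_mem_graded hn (hy0 y' hy')) hx'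
        rwa [h10, h11] at this
      have hzm : z * (n * y' * x') ∈ I := (hImul _ hm z (hVI z hz)).2
      have h0 : (z * (n * y' * x')) * (x₁ * a' - a' * x₁) = 0 := h1 _ hzm a' ha'
      calc z * n * (y' * x' * (x₁ * a' - a' * x₁))
          = (z * (n * y' * x')) * (x₁ * a' - a' * x₁) := by noncomm_ring
      _ = 0 := h0
    have hsplit : z * r * (y' * x' * (x₁ * a' - a' * x₁))
        = z * (DirectSum.decompose 𝒜 r 0 : A) * (y' * x' * (x₁ * a' - a' * x₁))
        + z * (DirectSum.decompose 𝒜 r 1 : A) * (y' * x' * (x₁ * a' - a' * x₁)) := by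
      conv_lhs => rw [← decompose_even_add_odd 𝒜 r]
      noncomm_ring
    rw [hsplit, heven _ (SetLike.coe_mem _), hodd _ (SetLike.coe_mem _), add_zero]
  -- V is homogeneous of degree 0
  have hVdeg : ∀ z ∈ V, z ∈ 𝒜 0 := fun z hz => hy0 z (hVI z hz)
  -- primeness kills V
  have hV0 : ∀ z ∈ V, z = 0 := by
    rcases pairPrime 𝒜 hprime hVdeg hVdeg hVmid with h | h
    · exact h
    · exact h
  -- hence  I * A * D(𝒜 0) = 0
  have hIAD : ∀ y ∈ I, ∀ r : A, ∀ a ∈ 𝒜 0, y * r * (x₁ * a - a * x₁) = 0 := by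
    intro y hy r a ha
    have heven : ∀ n ∈ 𝒜 0, y * n * (x₁ * a - a * x₁) = 0 := by
      intro n hn
      have hyn : y * n ∈ I := (hImul n hn y hy).2
      exact h1 _ hyn a ha
    have hodd : ∀ n ∈ 𝒜 1, y * n * (x₁ * a - a * x₁) = 0 := by
      intro n hn
      exact hV0 _ ⟨y, n, a, hy, hn, ha, rfl⟩
    have hsplit : y * r * (x₁ * a - a * x₁)
        = y * (DirectSum.decompose 𝒜 r 0 : A) * (x₁ * a - a * x₁)
        + y * (DirectSum.decompose 𝒜 r 1 : A) * (x₁ * a - a * x₁) := by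
      conv_lhs => rw [← decompose_even_add_odd 𝒜 r]
      noncomm_ring
    rw [hsplit, heven _ (SetLike.coe_mem _), hodd _ (SetLike.coe_mem _), add_zero]
  -- a nonzero element of I
  have hy₀ : ∃ y₀ ∈ I, y₀ ≠ 0 := by
    by_contra hcon
    push_neg at hcon
    exact hIne (Set.eq_singleton_iff_unique_mem.mpr ⟨hI0, hcon⟩)
  obtain ⟨y₀, hy₀I, hy₀ne⟩ := hy₀
  -- D a ∈ 𝒜 1
  have hDmem : ∀ a ∈ 𝒜 0, x₁ * a - a * x₁ ∈ 𝒜 1 := by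
    intro a ha
    have m1 : x₁ * a ∈ 𝒜 1 := by
      have := SetLike.mul_mem_graded hx₁ ha; rwa [h10] at this
    have m2 : a * x₁ ∈ 𝒜 1 := by
      have := SetLike.mul_mem_graded ha hx₁; rwa [h01] at this
    exact sub_mem m1 m2
  -- Phase 1 conclusion: x₁ commutes with 𝒜 0
  have hA0 : ∀ a ∈ 𝒜 0, x₁ * a = a * x₁ := by
    intro a ha
    rcases pairPrime 𝒜 hprime (G := {y₀}) (G' := {x₁ * a - a * x₁})
        (d := 0) (d' := 1)
        (by rintro g rfl; exact hy0 _ hy₀I)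
        (by rintro g rfl; exact hDmem a ha)
        (by rintro g rfl r w rfl; exact hIAD _ hy₀I r a ha) with h | h
    · exact absurd (h y₀ rfl) hy₀ne
    · have := h _ rfl
      rwa [sub_eq_zero] at this
  -- Phase 2 : x₁ commutes with 𝒜 1
  -- first : (x₁ * v - v * x₁) * x₁ = 0 for v odd
  have hTc : ∀ v ∈ 𝒜 1, (x₁ * v - v * x₁) * x₁ = 0 := by
    intro v hv
    have hvc : v * x₁ ∈ 𝒜 0 := by
      have := SetLike.mul_mem_graded hv hx₁; rwa [h11] at this
    have h0 : x₁ * (v * x₁) = (v * x₁) * x₁ := hA0 _ hvc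
    calc (x₁ * v - v * x₁) * x₁ = x₁ * (v * x₁) - (v * x₁) * x₁ := by noncomm_ring
    _ = 0 := by rw [h0, sub_self]
  -- key identity for two odds : D u * v = -(u * D v)
  have hkey : ∀ u ∈ 𝒜 1, ∀ v ∈ 𝒜 1,
      (x₁ * u - u * x₁) * v = -(u * (x₁ * v - v * x₁)) := by
    intro u hu v hv
    have huv : u * v ∈ 𝒜 0 := by
      have := SetLike.mul_mem_graded hu hv; rwa [h11] at this
    have h0 : x₁ * (u * v) = (u * v) * x₁ := hA0 _ huv
    have : (x₁ * u - u * x₁) * v + u * (x₁ * v - v * x₁) = 0 := by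
      calc (x₁ * u - u * x₁) * v + u * (x₁ * v - v * x₁)
          = x₁ * (u * v) - (u * v) * x₁ := by noncomm_ring
      _ = 0 := by rw [h0, sub_self]
    exact eq_neg_of_add_eq_zero_left this
  -- D u * r * x₁ = 0 for all r
  have hTnc : ∀ u ∈ 𝒜 1, ∀ r : A, (x₁ * u - u * x₁) * r * x₁ = 0 := by
    intro u hu r
    have heven : ∀ n ∈ 𝒜 0, (x₁ * u - u * x₁) * n * x₁ = 0 := by
      intro n hn
      have hun : u * n ∈ 𝒜 1 := by
        have := SetLike.mul_mem_graded hu hn; rwa [h10] at this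
      have hcn : x₁ * n = n * x₁ := hA0 n hn
      have e1 : (x₁ * u - u * x₁) * n = x₁ * (u * n) - (u * n) * x₁ := by
        calc (x₁ * u - u * x₁) * n = x₁ * (u * n) - u * (x₁ * n) := by noncomm_ring
        _ = x₁ * (u * n) - (u * n) * x₁ := by rw [hcn, mul_assoc]
      rw [e1]
      exact hTc _ hun
    have hodd : ∀ n ∈ 𝒜 1, (x₁ * u - u * x₁) * n * x₁ = 0 := by
      intro n hn
      rw [hkey u hu n hn, neg_mul, mul_assoc, hTc n hn, mul_zero, neg_zero]
    have hsplit : (x₁ * u - u * x₁) * r * x₁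
        = (x₁ * u - u * x₁) * (DirectSum.decompose 𝒜 r 0 : A) * x₁
        + (x₁ * u - u * x₁) * (DirectSum.decompose 𝒜 r 1 : A) * x₁ := by
      conv_lhs => rw [← decompose_even_add_odd 𝒜 r]
      noncomm_ring
    rw [hsplit, heven _ (SetLike.coe_mem _), hodd _ (SetLike.coe_mem _), add_zero]
  by_cases hczero : x₁ = 0
  · rw [hczero]; exact Subring.zero_mem _
  have hA1 : ∀ u ∈ 𝒜 1, x₁ * u = u * x₁ := by
    intro u hu
    have hDu0 : x₁ * u - u * x₁ ∈ 𝒜 0 := by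
      have m1 : x₁ * u ∈ 𝒜 0 := by
        have := SetLike.mul_mem_graded hx₁ hu; rwa [h11] at this
      have m2 : u * x₁ ∈ 𝒜 0 := by
        have := SetLike.mul_mem_graded hu hx₁; rwa [h11] at this
      exact sub_mem m1 m2
    rcases pairPrime 𝒜 hprime (G := {x₁ * u - u * x₁}) (G' := {x₁})
        (d := 0) (d' := 1)
        (by rintro g rfl; exact hDu0)
        (by rintro g rfl; exact hx₁)
        (by rintro g rfl r w rfl; exact hTnc u hu r) with h | h
    · have := h _ rfl
      rwa [sub_eq_zero] at this
    · exact absurd (h _ rfl) hczero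
  -- conclude
  rw [Subring.mem_center_iff]
  intro g
  conv_lhs => rw [← decompose_even_add_odd 𝒜 g]
  conv_rhs => rw [← decompose_even_add_odd 𝒜 g]
  rw [add_mul, mul_add, hA0 _ (SetLike.coe_mem _), hA1 _ (SetLike.coe_mem _)]
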